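/- Let G, H, and the auxiliary graph G' be as in the heavy/light construction (heavy = degree ≥ √n; centers of weight-1/2 edges attached to heavy components; all light-incident edges kept with weight 1). Then for every vertex v, dist_G(s,v) ≤ dist_{G'}(s,v) + 5√n. -/

import Mathlib

open scoped ENNReal

variable {V : Type*}

/-- Weight of a walk in a graph, for a weight function on pairs of vertices. -/
noncomputable def walkWeight {α : Type*} {H : SimpleGraph α} (w : α → α → ℝ≥0∞) :
    {u v : α} → H.Walk u v → ℝ≥0∞
  | _, _, SimpleGraph.Walk.nil => 0
  | u, _, SimpleGraph.Walk.cons (v := x) _ p => w u x + walkWeight w p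

/-- Weighted shortest-path distance (∞ if there is no walk). -/
noncomputable def wDist {α : Type*} (H : SimpleGraph α) (w : α → α → ℝ≥0∞) (u v : α) : ℝ≥0∞ :=
  ⨅ p : H.Walk u v, walkWeight w p

/-- A vertex is heavy if its degree is at least √n. -/
def Heavy [Fintype V] (G : SimpleGraph V) [DecidableRel G.Adj] (v : V) : Prop :=
  Real.sqrt (Fintype.card V) ≤ (G.degree v : ℝ)

/-- The set of heavy vertices. -/
def heavySet [Fintype V] (G : SimpleGraph V) [DecidableRel G.Adj] : Set V :=
  {v | Heavy G v}

/-- Connected components of the induced subgraph on heavy vertices. -/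
abbrev HeavyComp [Fintype V] (G : SimpleGraph V) [DecidableRel G.Adj] :=
  (G.induce (heavySet G)).ConnectedComponent

/-- The underlying relation of the auxiliary graph: original edges with at least one
light endpoint, and an edge between each heavy vertex and the center of its component. -/
def auxRel [Fintype V] (G : SimpleGraph V) [DecidableRel G.Adj] :
    (V ⊕ HeavyComp G) → (V ⊕ HeavyComp G) → Prop
  | Sum.inl a, Sum.inl b => G.Adj a b ∧ (¬ Heavy G a ∨ ¬ Heavy G b)
  | Sum.inl a, Sum.inr c =>
      ∃ h : Heavy G a, (G.induce (heavySet G)).connectedComponentMk ⟨a, h⟩ = c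
  | _, _ => False

/-- The auxiliary graph `G'`. -/
def auxGraph [Fintype V] (G : SimpleGraph V) [DecidableRel G.Adj] :
    SimpleGraph (V ⊕ HeavyComp G) :=
  SimpleGraph.fromRel (auxRel G)

/-- Edge weights in the auxiliary graph: original edges have weight 1,
center edges have weight 1/2. -/
noncomputable def auxWeight [Fintype V] (G : SimpleGraph V) [DecidableRel G.Adj] :
    (V ⊕ HeavyComp G) → (V ⊕ HeavyComp G) → ℝ≥0∞
  | Sum.inl _, Sum.inl _ => 1
  | _, _ => 1/2

/-! ### Auxiliary machinery for the proof -/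

section Aux

open SimpleGraph

@[simp] lemma walkWeight_nil {α : Type*} {H : SimpleGraph α} (w : α → α → ℝ≥0∞) {u : α} :
    walkWeight w (SimpleGraph.Walk.nil : H.Walk u u) = 0 := rfl

@[simp] lemma walkWeight_cons {α : Type*} {H : SimpleGraph α} (w : α → α → ℝ≥0∞)
    {u x v : α} (h : H.Adj u x) (p : H.Walk x v) :
    walkWeight w (SimpleGraph.Walk.cons h p) = w u x + walkWeight w p := rfl

/-- Unweighted shortest-walk distance in `ℝ≥0∞`. -/
noncomputable def eDist (G : SimpleGraph V) (x y : V) : ℝ≥0∞ :=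
  ⨅ p : G.Walk x y, (p.length : ℝ≥0∞)

lemma eDist_self (G : SimpleGraph V) (x : V) : eDist G x x = 0 := by
  refine le_antisymm ?_ zero_le
  simpa [eDist] using iInf_le (fun p : G.Walk x x => (p.length : ℝ≥0∞)) SimpleGraph.Walk.nil

lemma eDist_le_add (G : SimpleGraph V) {x m v : V} (k : ℕ)
    (h : ∀ q : G.Walk m v, ∃ r : G.Walk x v, r.length ≤ q.length + k) :
    eDist G x v ≤ eDist G m v + k := by
  rw [eDist, eDist, ENNReal.iInf_add]
  refine le_iInf fun q => ?_
  obtain ⟨r, hr⟩ := h q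
  refine le_trans (iInf_le _ r) ?_
  exact_mod_cast hr

lemma eDist_le_adj (G : SimpleGraph V) {x m v : V} (h : G.Adj x m) :
    eDist G x v ≤ eDist G m v + 1 := by
  have := eDist_le_add G (x := x) (m := m) (v := v) 1
    (fun q => ⟨q.cons h, by simp⟩)
  simpa using this

lemma eDist_le_two (G : SimpleGraph V) {x u v : V} (r0 : G.Walk x u) (hr0 : r0.length ≤ 2) :
    eDist G x v ≤ eDist G u v + 2 := by
  have := eDist_le_add G (x := x) (m := u) (v := v) 2
    (fun q => ⟨r0.append q, by rw [SimpleGraph.Walk.length_append]; omega⟩)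
  simpa using this

/-- Closed neighborhood as a finset. -/
def nbr [Fintype V] [DecidableEq V] (G : SimpleGraph V) [DecidableRel G.Adj] (a : V) :
    Finset V := insert a (G.neighborFinset a)

lemma mem_nbr [Fintype V] [DecidableEq V] (G : SimpleGraph V) [DecidableRel G.Adj]
    {a w : V} : w ∈ nbr G a ↔ w = a ∨ G.Adj a w := by
  simp [nbr]

lemma self_mem_nbr [Fintype V] [DecidableEq V] (G : SimpleGraph V) [DecidableRel G.Adj]
    (a : V) : a ∈ nbr G a := (mem_nbr G).2 (Or.inl rfl)

lemma card_nbr [Fintype V] [DecidableEq V] (G : SimpleGraph V) [DecidableRel G.Adj]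
    (a : V) : (nbr G a).card = G.degree a + 1 := by
  rw [nbr, Finset.card_insert_of_notMem (SimpleGraph.notMem_neighborFinset_self G a),
    SimpleGraph.card_neighborFinset_eq_degree]

lemma walk_of_common (G : SimpleGraph V) {x u w : V}
    (hx : w = x ∨ G.Adj x w) (hu : w = u ∨ G.Adj u w) :
    ∃ r : G.Walk x u, r.length ≤ 2 := by
  rcases hx with rfl | hx
  · rcases hu with rfl | hu
    · exact ⟨SimpleGraph.Walk.nil, by simp⟩
    · exact ⟨SimpleGraph.Walk.cons hu.symm SimpleGraph.Walk.nil, by simp⟩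
  · rcases hu with rfl | hu
    · exact ⟨SimpleGraph.Walk.cons hx SimpleGraph.Walk.nil, by simp⟩
    · exact ⟨SimpleGraph.Walk.cons hx (SimpleGraph.Walk.cons hu.symm SimpleGraph.Walk.nil),
        by simp⟩

/-- A good family: heavy vertices with pairwise disjoint closed neighborhoods. -/
def GoodFam [Fintype V] [DecidableEq V] (G : SimpleGraph V) [DecidableRel G.Adj]
    (K : Finset V) : Prop :=
  (∀ u ∈ K, Heavy G u) ∧
    (K : Set V).Pairwise fun a b => Disjoint (nbr G a) (nbr G b)

lemma goodFam_empty [Fintype V] [DecidableEq V] (G : SimpleGraph V) [DecidableRel G.Adj] :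
    GoodFam G (∅ : Finset V) := by
  constructor
  · intro u hu; simp at hu
  · simp

lemma goodFam_card [Fintype V] [DecidableEq V] (G : SimpleGraph V) [DecidableRel G.Adj]
    {K : Finset V} (h : GoodFam G K) :
    (K.card : ℝ) * (Real.sqrt (Fintype.card V) + 1) ≤ (Fintype.card V : ℝ) := by
  classical
  have hdisj : ∀ a ∈ K, ∀ b ∈ K, a ≠ b → Disjoint (nbr G a) (nbr G b) := by
    intro a ha b hb hab
    exact h.2 (by exact_mod_cast ha) (by exact_mod_cast hb) hab
  have hcard : ∑ u ∈ K, (nbr G u).card = (K.biUnion (nbr G)).card :=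
    (Finset.card_biUnion hdisj).symm
  have hle : (K.biUnion (nbr G)).card ≤ Fintype.card V := by
    simpa using Finset.card_le_card (Finset.subset_univ (K.biUnion (nbr G)))
  have hsum : (∑ u ∈ K, ((nbr G u).card : ℝ)) ≤ (Fintype.card V : ℝ) := by
    rw [← Nat.cast_sum]
    exact_mod_cast hcard ▸ hle
  have hterm : ∀ u ∈ K, Real.sqrt (Fintype.card V) + 1 ≤ ((nbr G u).card : ℝ) := by
    intro u hu
    rw [card_nbr]
    push_cast
    have := h.1 u hu
    rw [Heavy] at this
    linarith
  calc (K.card : ℝ) * (Real.sqrt (Fintype.card V) + 1)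
      = K.card • (Real.sqrt (Fintype.card V) + 1) := by
        rw [nsmul_eq_mul]
    _ ≤ ∑ u ∈ K, ((nbr G u).card : ℝ) := Finset.card_nsmul_le_sum _ _ _ hterm
    _ ≤ (Fintype.card V : ℝ) := hsum

lemma goodFam_bound [Fintype V] [DecidableEq V] (G : SimpleGraph V) [DecidableRel G.Adj]
    [Nonempty V] {K : Finset V} (h : GoodFam G K) :
    (3 * K.card + 1 : ℝ) ≤ 5 * Real.sqrt (Fintype.card V) := by
  have hn : (1 : ℝ) ≤ (Fintype.card V : ℝ) := by
    exact_mod_cast Fintype.card_pos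
  set x := Real.sqrt (Fintype.card V) with hx
  have hx1 : (1 : ℝ) ≤ x := by
    rw [hx, show (1:ℝ) = Real.sqrt 1 by simp]
    exact Real.sqrt_le_sqrt hn
  have hxx : x * x = (Fintype.card V : ℝ) :=
    Real.mul_self_sqrt (by positivity)
  have hK : (K.card : ℝ) * (x + 1) ≤ x * x := by
    rw [hxx]; exact goodFam_card G h
  have hk0 : (0 : ℝ) ≤ (K.card : ℝ) := by positivity
  nlinarith [hK, hx1, hk0]

lemma aux_adj_inl_inl [Fintype V] (G : SimpleGraph V) [DecidableRel G.Adj] {a b : V}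
    (h : (auxGraph G).Adj (Sum.inl a) (Sum.inl b)) : G.Adj a b := by
  rw [auxGraph, SimpleGraph.fromRel_adj] at h
  rcases h.2 with h' | h'
  · exact h'.1
  · exact h'.1.symm

lemma aux_adj_inl_inr [Fintype V] (G : SimpleGraph V) [DecidableRel G.Adj] {a : V}
    {c : HeavyComp G} (h : (auxGraph G).Adj (Sum.inl a) (Sum.inr c)) :
    ∃ ha : Heavy G a, (G.induce (heavySet G)).connectedComponentMk ⟨a, ha⟩ = c := by
  rw [auxGraph, SimpleGraph.fromRel_adj] at h
  rcases h.2 with h' | h'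
  · exact h'
  · exact h'.elim

lemma aux_adj_inr_inr [Fintype V] (G : SimpleGraph V) [DecidableRel G.Adj]
    {c d : HeavyComp G} (h : (auxGraph G).Adj (Sum.inr c) (Sum.inr d)) : False := by
  rw [auxGraph, SimpleGraph.fromRel_adj] at h
  rcases h.2 with h' | h' <;> exact h'

/-- The chain lemma: walking through a heavy component, we can bound the distance
to `v`, extending the good family; each new selected vertex costs `3`, and steps
close to a previously selected vertex cost nothing. -/
lemma chain [Fintype V] [DecidableEq V] (G : SimpleGraph V) [DecidableRel G.Adj]
    (v : V) (W : ℝ≥0∞) :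
    ∀ (a b : heavySet G) (wk : (G.induce (heavySet G)).Walk a b) (K : Finset V),
      GoodFam G K →
      eDist G (b : V) v ≤ W + 3 * K.card + 1 →
      (∀ u ∈ K, eDist G u v + 2 ≤ W + 3 * K.card + 1) →
      ∃ K' : Finset V, GoodFam G K' ∧ eDist G (a : V) v ≤ W + 3 * K'.card + 1 ∧
        ∀ u ∈ K', eDist G u v + 2 ≤ W + 3 * K'.card + 1 := by
  intro a b wk
  induction wk with
  | nil =>
    intro K hK hb hu
    exact ⟨K, hK, hb, hu⟩
  | @cons a m b hadj tail ih =>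
    intro K hK hb hu
    obtain ⟨K₁, hK₁, hm, hu₁⟩ := ih K hK hb hu
    have hadjG : G.Adj (a : V) (m : V) := by simpa using hadj
    by_cases hcl : ∃ u ∈ K₁, ¬ Disjoint (nbr G (a : V)) (nbr G u)
    · obtain ⟨u, huK, hnd⟩ := hcl
      obtain ⟨w, hw1, hw2⟩ := Finset.not_disjoint_iff.mp hnd
      obtain ⟨r, hr⟩ := walk_of_common G ((mem_nbr G).1 hw1) ((mem_nbr G).1 hw2)
      have h1 : eDist G (a : V) v ≤ eDist G u v + 2 := eDist_le_two G r hr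
      exact ⟨K₁, hK₁, h1.trans (hu₁ u huK), hu₁⟩
    · push_neg at hcl
      have haK : (a : V) ∉ K₁ := by
        intro hmem
        exact absurd (hcl _ hmem)
          (Finset.not_disjoint_iff.mpr ⟨a, self_mem_nbr G a, self_mem_nbr G a⟩)
      refine ⟨insert (a : V) K₁, ?_, ?_, ?_⟩
      · constructor
        · intro u hu'
          rcases Finset.mem_insert.1 hu' with rfl | hu'
          · exact a.2
          · exact hK₁.1 u hu'
        · rw [Finset.coe_insert]
          rw [Set.pairwise_insert]
          refine ⟨hK₁.2, ?_⟩
          intro u hu' hne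
          have := hcl u (by exact_mod_cast hu')
          exact ⟨this, this.symm⟩
      · have hcard : ((insert (a : V) K₁).card : ℝ≥0∞) = (K₁.card : ℝ≥0∞) + 1 := by
          rw [Finset.card_insert_of_notMem haK]; push_cast; ring
        rw [hcard]
        calc eDist G (a : V) v ≤ eDist G (m : V) v + 1 := eDist_le_adj G hadjG
          _ ≤ (W + 3 * K₁.card + 1) + 1 := by gcongr
          _ = (W + 3 * (K₁.card:ℝ≥0∞)) + 2 := by ring
          _ ≤ (W + 3 * (K₁.card:ℝ≥0∞)) + 4 := by
              gcongr
              norm_num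
          _ = W + 3 * ((K₁.card : ℝ≥0∞) + 1) + 1 := by ring
      · intro u hu'
        have hcard : ((insert (a : V) K₁).card : ℝ≥0∞) = (K₁.card : ℝ≥0∞) + 1 := by
          rw [Finset.card_insert_of_notMem haK]; push_cast; ring
        rw [hcard]
        have hmono : W + 3 * (K₁.card:ℝ≥0∞) + 1 ≤ W + 3 * ((K₁.card:ℝ≥0∞) + 1) + 1 := by
          calc W + 3 * (K₁.card:ℝ≥0∞) + 1 = (W + 3 * (K₁.card:ℝ≥0∞)) + 1 := by ring
            _ ≤ (W + 3 * (K₁.card:ℝ≥0∞)) + 4 := by gcongr; norm_num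
            _ = W + 3 * ((K₁.card:ℝ≥0∞) + 1) + 1 := by ring
        rcases Finset.mem_insert.1 hu' with rfl | hu'
        · calc eDist G (a : V) v + 2 ≤ (eDist G (m : V) v + 1) + 2 := by
                gcongr
                exact eDist_le_adj G hadjG
            _ ≤ ((W + 3 * K₁.card + 1) + 1) + 2 := by gcongr
            _ = W + 3 * ((K₁.card:ℝ≥0∞) + 1) + 1 := by ring
        · exact (hu₁ u hu').trans hmono

/-- The main induction: along any walk in the auxiliary graph ending at `inl v`,
the distance in `G` to `v` is bounded by the walk weight plus `3|K| + 1` for a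
good family `K`. -/
lemma mainLemma [Fintype V] [DecidableEq V] (G : SimpleGraph V) [DecidableRel G.Adj]
    (v : V) :
    ∀ (t t' : V ⊕ HeavyComp G) (p : (auxGraph G).Walk t t'), t' = Sum.inl v →
      (∀ z : V, t = Sum.inl z →
        ∃ K : Finset V, GoodFam G K ∧
          eDist G z v ≤ walkWeight (auxWeight G) p + 3 * K.card + 1 ∧
          ∀ u ∈ K, eDist G u v + 2 ≤ walkWeight (auxWeight G) p + 3 * K.card + 1) ∧
      (∀ c : HeavyComp G, t = Sum.inr c →
        ∀ (a : V) (ha : Heavy G a),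
          (G.induce (heavySet G)).connectedComponentMk ⟨a, ha⟩ = c →
          ∃ K : Finset V, GoodFam G K ∧
            eDist G a v ≤ walkWeight (auxWeight G) p + 3 * K.card + 1 ∧
            ∀ u ∈ K, eDist G u v + 2 ≤ walkWeight (auxWeight G) p + 3 * K.card + 1) := by
  intro t t' p
  induction p with
  | nil =>
    intro hend
    subst hend
    constructor
    · rintro z hz
      rw [Sum.inl.injEq] at hz
      subst hz
      refine ⟨∅, goodFam_empty G, ?_, ?_⟩
      · rw [eDist_self]
        exact zero_le
      · intro u hu; simp at hu
    · rintro c hc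
      simp at hc
  | @cons t t₂ t₃ h tail ih =>
    intro hend
    subst hend
    have hwt : walkWeight (auxWeight G) tail ≤
        walkWeight (auxWeight G) (SimpleGraph.Walk.cons h tail) := by
      rw [walkWeight_cons]
      exact le_add_self
    constructor
    · rintro z rfl
      cases t₂ with
      | inl z' =>
        obtain ⟨K, hK, hz', hus⟩ := (ih rfl).1 z' rfl
        have hadj := aux_adj_inl_inl G h
        have hw1 : auxWeight G (Sum.inl z) (Sum.inl z') = 1 := rfl
        refine ⟨K, hK, ?_, ?_⟩
        · calc eDist G z v ≤ eDist G z' v + 1 := eDist_le_adj G hadj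
            _ ≤ (walkWeight (auxWeight G) tail + 3 * K.card + 1) + 1 := by gcongr
            _ = (1 + walkWeight (auxWeight G) tail) + 3 * K.card + 1 := by ring
            _ = walkWeight (auxWeight G) (SimpleGraph.Walk.cons h tail) + 3 * K.card + 1 := by
                rw [walkWeight_cons, hw1]
        · intro u hu
          refine (hus u hu).trans ?_
          gcongr
      | inr c =>
        obtain ⟨hz, hc⟩ := aux_adj_inl_inr G h
        obtain ⟨K, hK, h1, h2⟩ := (ih rfl).2 c rfl z hz hc
        exact ⟨K, hK, h1.trans (by gcongr), fun u hu => (h2 u hu).trans (by gcongr)⟩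
    · rintro c rfl a ha hac
      cases t₂ with
      | inl z'' =>
        obtain ⟨K, hK, hz'', hus⟩ := (ih rfl).1 z'' rfl
        obtain ⟨h'', hc''⟩ := aux_adj_inl_inr G h.symm
        have hreach : (G.induce (heavySet G)).Reachable ⟨a, ha⟩ ⟨z'', h''⟩ :=
          SimpleGraph.ConnectedComponent.exact (hac.trans hc''.symm)
        obtain ⟨wk⟩ := hreach
        obtain ⟨K', hK', h1, h2⟩ :=
          chain G v (walkWeight (auxWeight G) tail) ⟨a, ha⟩ ⟨z'', h''⟩ wk K hK hz'' hus
        exact ⟨K', hK', h1.trans (by gcongr), fun u hu => (h2 u hu).trans (by gcongr)⟩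
      | inr d => exact (aux_adj_inr_inr G h).elim

end Aux

/-- dist_G(s,v) ≤ dist_{G'}(s,v) + 5√n for every vertex v. -/
theorem stmt_4 [Fintype V] [DecidableEq V] (G : SimpleGraph V) [DecidableRel G.Adj]
    (s : V) :
    ∀ v : V,
      (⨅ p : G.Walk s v, (p.length : ℝ≥0∞)) ≤
        wDist (auxGraph G) (auxWeight G) (Sum.inl s) (Sum.inl v) +
          ENNReal.ofReal (5 * Real.sqrt (Fintype.card V)) := by
  intro v
  have hne : Nonempty V := ⟨s⟩
  rw [wDist, ENNReal.iInf_add]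
  refine le_iInf fun p => ?_
  obtain ⟨K, hK, h1, -⟩ := (mainLemma G v (Sum.inl s) (Sum.inl v) p rfl).1 s rfl
  have h2 : (3 * K.card + 1 : ℝ≥0∞) ≤ ENNReal.ofReal (5 * Real.sqrt (Fintype.card V)) := by
    have hb := goodFam_bound G hK
    calc (3 * K.card + 1 : ℝ≥0∞) = ((3 * K.card + 1 : ℕ) : ℝ≥0∞) := by push_cast; ring
      _ = ENNReal.ofReal ((3 * K.card + 1 : ℕ) : ℝ) := (ENNReal.ofReal_natCast _).symm
      _ ≤ ENNReal.ofReal (5 * Real.sqrt (Fintype.card V)) := by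
          apply ENNReal.ofReal_le_ofReal
          push_cast
          linarith
  calc (⨅ q : G.Walk s v, (q.length : ℝ≥0∞)) = eDist G s v := rfl
    _ ≤ walkWeight (auxWeight G) p + 3 * K.card + 1 := h1
    _ = walkWeight (auxWeight G) p + (3 * K.card + 1) := by ring
    _ ≤ walkWeight (auxWeight G) p + ENNReal.ofReal (5 * Real.sqrt (Fintype.card V)) := by
        gcongr
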